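/- arXiv:2605.02459 — 2 statements merged into one kernel-verified Lean document; each statement's English description precedes it below -/
import Mathlib

section
/- Let p ∈ ℂ[y] with d := deg p ≥ 2 and let α, β, δ ∈ ℂ with αβ ≠ 0. Set e(x,y) = (α x + p(y), β y + δ). For any ε ∈ (0,1) there exists R₀ ≥ 1 such that for all R ≥ R₀: if ‖(x,y)‖ ≥ R and |y| ≥ ε|x|, then |α x + p(y)| > ε⁻¹ |β y + δ|; in particular e maps V⁺_{R,ε} into the region V⁻ = {(u,v) : |u| > ε⁻¹|v|}. -/
open Polynomial Filter

/-- If `deg p ≥ 2`, then `‖p(y)‖` eventually dominates any affine function of `‖y‖`. -/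
lemma poly_dominates_linear (p : Polynomial ℂ) (hd : 2 ≤ p.natDegree) (A B : ℝ) :
    ∃ Y ≥ (1 : ℝ), ∀ y : ℂ, Y ≤ ‖y‖ → A * ‖y‖ + B < ‖p.eval y‖ := by
  have hp0 : p ≠ 0 := fun h => by simp [h] at hd
  set q := p /ₘ (X ^ 2 : ℂ[X]) with hq
  set r := p %ₘ (X ^ 2 : ℂ[X]) with hr
  have hmonic : (X ^ 2 : ℂ[X]).Monic := monic_X_pow 2
  have hpqr : r + X ^ 2 * q = p := modByMonic_add_div p (X ^ 2)
  have hdegr : r.degree < 2 := by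
    have := degree_modByMonic_lt p hmonic
    simpa [degree_X_pow] using this
  have hdegr1 : r.degree ≤ 1 := by
    generalize r.degree = d at hdegr ⊢
    cases d with
    | bot => exact bot_le
    | coe n =>
        have h2 : n < 2 := WithBot.coe_lt_coe.mp hdegr
        exact WithBot.coe_le_coe.mpr (Nat.lt_succ_iff.mp h2)
  have hrform : r = C (r.coeff 1) * X + C (r.coeff 0) :=
    eq_X_add_C_of_degree_le_one hdegr1
  have hqne : q ≠ 0 := by
    intro h
    rw [h, mul_zero, add_zero] at hpqr
    rw [← hpqr] at hd
    have : r.natDegree ≤ 1 := natDegree_le_iff_degree_le.mpr hdegr1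
    omega
  -- lower bound on ‖q.eval y‖
  obtain ⟨c, hc, Y₁, hY₁⟩ : ∃ c > (0:ℝ), ∃ Y₁ : ℝ, ∀ y : ℂ, Y₁ ≤ ‖y‖ → c ≤ ‖q.eval y‖ := by
    rcases le_or_gt q.degree 0 with h | h
    · obtain ⟨a, hqa⟩ : ∃ a, q = C a := ⟨q.coeff 0, eq_C_of_degree_le_zero h⟩
      have ha : a ≠ 0 := fun h0 => hqne (by rw [hqa, h0, map_zero])
      exact ⟨‖a‖, norm_pos_iff.mpr ha, 0, fun y _ => by rw [hqa]; simp⟩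
    · have ht : Tendsto (fun y : ℂ => ‖q.eval y‖) (Filter.comap norm atTop) atTop :=
        q.tendsto_norm_atTop h tendsto_comap
      have hev : ∀ᶠ y in Filter.comap (norm : ℂ → ℝ) atTop, 1 ≤ ‖q.eval y‖ :=
        ht.eventually (eventually_ge_atTop 1)
      rw [Filter.eventually_comap] at hev
      obtain ⟨Y₁, hY₁⟩ := eventually_atTop.mp hev
      exact ⟨1, one_pos, Y₁, fun y hy => hY₁ ‖y‖ hy y rfl⟩
  set c₀ := ‖r.coeff 0‖
  set c₁ := ‖r.coeff 1‖
  refine ⟨max 1 (max Y₁ ((|A| + c₁ + |B| + c₀ + 1) / c)), le_max_left _ _, fun y hy => ?_⟩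
  have hy1 : (1:ℝ) ≤ ‖y‖ := le_trans (le_max_left _ _) hy
  have hyY₁ : Y₁ ≤ ‖y‖ := le_trans (le_max_of_le_right (le_max_left _ _)) hy
  have hyM : (|A| + c₁ + |B| + c₀ + 1) / c ≤ ‖y‖ :=
    le_trans (le_max_of_le_right (le_max_right _ _)) hy
  have hqy : c ≤ ‖q.eval y‖ := hY₁ y hyY₁
  have hry : ‖r.eval y‖ ≤ c₁ * ‖y‖ + c₀ := by
    conv_lhs => rw [hrform]
    simp only [eval_add, eval_mul, eval_C, eval_X]
    calc ‖r.coeff 1 * y + r.coeff 0‖ ≤ ‖r.coeff 1 * y‖ + ‖r.coeff 0‖ := norm_add_le _ _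
      _ = c₁ * ‖y‖ + c₀ := by rw [norm_mul]
  have hpy : ‖y‖ ^ 2 * ‖q.eval y‖ - ‖r.eval y‖ ≤ ‖p.eval y‖ := by
    set u : ℂ := (X ^ 2 * q : ℂ[X]).eval y with hu
    have hnu : ‖u‖ = ‖y‖ ^ 2 * ‖q.eval y‖ := by
      rw [hu, eval_mul, eval_pow, eval_X, norm_mul, norm_pow]
    have h1 : ‖u‖ ≤ ‖r.eval y + u‖ + ‖r.eval y‖ := by
      have h2 := norm_sub_le (r.eval y + u) (r.eval y)
      rw [add_sub_cancel_left] at h2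
      linarith
    have h3 : ‖r.eval y + u‖ = ‖p.eval y‖ := by rw [hu, ← eval_add, hpqr]
    rw [h3] at h1
    linarith [hnu.ge, hnu.le]
  have key : (|A| + c₁ + |B| + c₀ + 1) * ‖y‖ ≤ ‖y‖ ^ 2 * ‖q.eval y‖ := by
    have h1 : (|A| + c₁ + |B| + c₀ + 1) ≤ c * ‖y‖ := by
      rw [div_le_iff₀ hc] at hyM; linarith [hyM]
    calc (|A| + c₁ + |B| + c₀ + 1) * ‖y‖ ≤ (c * ‖y‖) * ‖y‖ := by
          apply mul_le_mul_of_nonneg_right h1 (norm_nonneg y)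
      _ = ‖y‖ ^ 2 * c := by ring
      _ ≤ ‖y‖ ^ 2 * ‖q.eval y‖ := by
          apply mul_le_mul_of_nonneg_left hqy (sq_nonneg _)
  have hA : A * ‖y‖ ≤ |A| * ‖y‖ :=
    mul_le_mul_of_nonneg_right (le_abs_self A) (norm_nonneg y)
  have hB : B ≤ |B| := le_abs_self B
  have hext : (|B| + c₀ + 1) ≤ (|B| + c₀ + 1) * ‖y‖ :=
    le_mul_of_one_le_right (by positivity) hy1
  linarith

/-- Filtration property: an elementary map `e(x,y) = (αx + p(y), βy + δ)` with
`αβ ≠ 0` and `deg p ≥ 2` pushes the sector `V⁺_{R,ε} = {‖(x,y)‖ ≥ R, |y| ≥ ε|x|}`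
into the complementary sector `V⁻ = {(u,v) : |u| > ε⁻¹ |v|}`, for all `R` larger
than some `R₀ ≥ 1`.  Here `‖(x,y)‖ = max (|x|, |y|)`. -/
theorem elementary_maps_sector_into_complement (α β δ : ℂ) (hαβ : α * β ≠ 0)
    (p : Polynomial ℂ) (hd : 2 ≤ p.natDegree) (ε : ℝ) (hε0 : 0 < ε) (hε1 : ε < 1) :
    ∃ R₀ ≥ (1 : ℝ), ∀ R ≥ R₀, ∀ x y : ℂ,
      R ≤ max ‖x‖ ‖y‖ →
      ε * ‖x‖ ≤ ‖y‖ →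
      ε⁻¹ * ‖β * y + δ‖ < ‖α * x + p.eval y‖ := by
  obtain ⟨Y, hY1, hY⟩ := poly_dominates_linear p hd ((‖α‖ + ‖β‖) / ε) (‖δ‖ / ε)
  refine ⟨max 1 (Y / ε), le_max_left _ _, fun R hR x y hmax hsec => ?_⟩
  have hR1 : (1 : ℝ) ≤ R := le_trans (le_max_left _ _) hR
  have hRY : Y / ε ≤ R := le_trans (le_max_right _ _) hR
  -- lower bound on ‖y‖
  have hyR : ε * R ≤ ‖y‖ := by
    rcases le_total ‖x‖ ‖y‖ with h | h
    · rw [max_eq_right h] at hmax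
      nlinarith
    · rw [max_eq_left h] at hmax
      calc ε * R ≤ ε * ‖x‖ := by nlinarith
        _ ≤ ‖y‖ := hsec
  have hyY : Y ≤ ‖y‖ := by
    have : Y = ε * (Y / ε) := by field_simp
    rw [this]
    calc ε * (Y / ε) ≤ ε * R := by nlinarith
      _ ≤ ‖y‖ := hyR
  have hkey : (‖α‖ + ‖β‖) / ε * ‖y‖ + ‖δ‖ / ε < ‖p.eval y‖ := hY y hyY
  have h1 : ε⁻¹ * ‖β * y + δ‖ ≤ ε⁻¹ * (‖β‖ * ‖y‖ + ‖δ‖) := by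
    apply mul_le_mul_of_nonneg_left _ (inv_nonneg.mpr hε0.le)
    calc ‖β * y + δ‖ ≤ ‖β * y‖ + ‖δ‖ := norm_add_le _ _
      _ = ‖β‖ * ‖y‖ + ‖δ‖ := by rw [norm_mul]
  have h3 : ‖p.eval y‖ - ‖α‖ * ‖x‖ ≤ ‖α * x + p.eval y‖ := by
    have := norm_sub_le (α * x + p.eval y) (α * x)
    rw [add_sub_cancel_left, norm_mul] at this
    linarith
  have h4 : ‖α‖ * ‖x‖ ≤ ‖α‖ * (‖y‖ / ε) := by
    apply mul_le_mul_of_nonneg_left _ (norm_nonneg α)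
    rw [le_div_iff₀ hε0]
    linarith [hsec]
  have h2 : ε⁻¹ * (‖β‖ * ‖y‖ + ‖δ‖) = ‖β‖ / ε * ‖y‖ + ‖δ‖ / ε := by ring
  have h5 : (‖α‖ + ‖β‖) / ε * ‖y‖ - ‖α‖ * (‖y‖ / ε) = ‖β‖ / ε * ‖y‖ := by ring
  linarith
end

section
/- Let f be a polynomial automorphism of ℂ² that is a product h_k ⋯ h_1 where each h_i = a_i ∘ e_i with a_i affine not fixing the point I = [1:0:0] ∈ ℙ² (viewing a_i as an automorphism of ℙ² preserving the line at infinity) and e_i elementary of degree d_i ≥ 2. Then deg(f) = d_k ⋯ d_1. -/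
open MvPolynomial


open MvPolynomial

section Aux
variable {σ : Type*}

lemma td_C_mul (a : ℂ) (ha : a ≠ 0) (q : MvPolynomial σ ℂ) :
    (C a * q).totalDegree = q.totalDegree := by
  apply le_antisymm ((totalDegree_mul _ _).trans (by simp))
  have : q = C a⁻¹ * (C a * q) := by
    rw [← mul_assoc, ← C_mul, inv_mul_cancel₀ ha, C_1, one_mul]
  conv_lhs => rw [this]
  exact (totalDegree_mul _ _).trans (by simp)

lemma homComp_td_ne_zero {q : MvPolynomial σ ℂ} (hq : q ≠ 0) :
    homogeneousComponent q.totalDegree q ≠ 0 := by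
  obtain ⟨d, hd, hdeg⟩ := q.support.exists_mem_eq_sup
    (Finset.nonempty_iff_ne_empty.mpr (mt MvPolynomial.support_eq_empty.mp hq)) (fun s => s.sum fun _ e => e)
  intro h0
  have hc : coeff d (homogeneousComponent q.totalDegree q) = coeff d q := by
    rw [coeff_homogeneousComponent, if_pos]
    rw [totalDegree, hdeg]; rfl
  rw [h0] at hc
  exact (mem_support_iff.mp hd) hc.symm

lemma homComp_eq_zero_of_small {x : MvPolynomial σ ℂ} {N : ℕ}
    (h : x = 0 ∨ x.totalDegree < N) : homogeneousComponent N x = 0 := by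
  rcases h with h | h
  · simp [h]
  · exact homogeneousComponent_eq_zero _ _ h

lemma sub_homComp_small (x : MvPolynomial σ ℂ) (N : ℕ) (hxN : x.totalDegree ≤ N) :
    (x - homogeneousComponent N x) = 0 ∨ (x - homogeneousComponent N x).totalDegree < N := by
  classical
  by_cases h0 : x - homogeneousComponent N x = 0
  · exact Or.inl h0
  right
  have hsupp : ∀ d ∈ (x - homogeneousComponent N x).support, (d.sum fun _ e => e) < N := by
    intro d hd
    rw [mem_support_iff, coeff_sub, coeff_homogeneousComponent] at hd
    by_cases hdeg : d.degree = N
    · simp [hdeg] at hd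
    · rw [if_neg hdeg, sub_zero] at hd
      have hle : (d.sum fun _ e => e) ≤ x.totalDegree :=
        le_totalDegree (mem_support_iff.mpr hd)
      have hne : (d.sum fun _ e => e) ≠ N := hdeg
      omega
  obtain ⟨d, hd⟩ := Finset.nonempty_iff_ne_empty.mpr (mt MvPolynomial.support_eq_empty.mp h0)
  have hN : 0 < N := lt_of_le_of_lt (Nat.zero_le _) (hsupp d hd)
  rw [totalDegree]
  exact (Finset.sup_lt_iff hN).mpr hsupp

lemma td_mul {φ ψ : MvPolynomial σ ℂ} (hφ : φ ≠ 0) (hψ : ψ ≠ 0) :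
    (φ * ψ).totalDegree = φ.totalDegree + ψ.totalDegree := by
  classical
  apply le_antisymm (totalDegree_mul _ _)
  have hrφ := sub_homComp_small φ φ.totalDegree le_rfl
  have hrψ := sub_homComp_small ψ ψ.totalDegree le_rfl
  have hφh := homogeneousComponent_isHomogeneous φ.totalDegree φ
  have hψh := homogeneousComponent_isHomogeneous ψ.totalDegree ψ
  have hdec : φ * ψ = homogeneousComponent φ.totalDegree φ * homogeneousComponent ψ.totalDegree ψ +
      (homogeneousComponent φ.totalDegree φ * (ψ - homogeneousComponent ψ.totalDegree ψ) +
       (φ - homogeneousComponent φ.totalDegree φ) * homogeneousComponent ψ.totalDegree ψ +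
       (φ - homogeneousComponent φ.totalDegree φ) * (ψ - homogeneousComponent ψ.totalDegree ψ)) := by
    ring
  have key : homogeneousComponent (φ.totalDegree + ψ.totalDegree) (φ * ψ) =
      homogeneousComponent φ.totalDegree φ * homogeneousComponent ψ.totalDegree ψ := by
    rw [hdec, map_add, map_add, map_add]
    have h1 : homogeneousComponent (φ.totalDegree + ψ.totalDegree)
        (homogeneousComponent φ.totalDegree φ * homogeneousComponent ψ.totalDegree ψ) =
        homogeneousComponent φ.totalDegree φ * homogeneousComponent ψ.totalDegree ψ := by
      rw [homogeneousComponent_of_mem ((mem_homogeneousSubmodule _ _).mpr (hφh.mul hψh)),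
        if_pos rfl]
    have h2 : homogeneousComponent (φ.totalDegree + ψ.totalDegree)
        (homogeneousComponent φ.totalDegree φ * (ψ - homogeneousComponent ψ.totalDegree ψ)) = 0 := by
      apply homComp_eq_zero_of_small
      rcases hrψ with h | h
      · left; rw [h, mul_zero]
      · right
        exact lt_of_le_of_lt (totalDegree_mul _ _)
          (add_lt_add_of_le_of_lt hφh.totalDegree_le h)
    have h3 : homogeneousComponent (φ.totalDegree + ψ.totalDegree)
        ((φ - homogeneousComponent φ.totalDegree φ) * homogeneousComponent ψ.totalDegree ψ) = 0 := by
      apply homComp_eq_zero_of_small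
      rcases hrφ with h | h
      · left; rw [h, zero_mul]
      · right
        exact lt_of_le_of_lt (totalDegree_mul _ _)
          (add_lt_add_of_lt_of_le h hψh.totalDegree_le)
    have h4 : homogeneousComponent (φ.totalDegree + ψ.totalDegree)
        ((φ - homogeneousComponent φ.totalDegree φ) * (ψ - homogeneousComponent ψ.totalDegree ψ)) = 0 := by
      apply homComp_eq_zero_of_small
      rcases hrφ with h | h
      · left; rw [h, zero_mul]
      rcases hrψ with h' | h'
      · left; rw [h', mul_zero]
      · right
        exact lt_of_le_of_lt (totalDegree_mul _ _) (add_lt_add h h')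
    rw [h1, h2, h3, h4, add_zero, add_zero, add_zero]
  have hne : homogeneousComponent (φ.totalDegree + ψ.totalDegree) (φ * ψ) ≠ 0 := by
    rw [key]
    exact mul_ne_zero (homComp_td_ne_zero hφ) (homComp_td_ne_zero hψ)
  obtain ⟨d, hd⟩ := ne_zero_iff.mp hne
  rw [coeff_homogeneousComponent] at hd
  by_cases hdeg : d.degree = φ.totalDegree + ψ.totalDegree
  · rw [if_pos hdeg] at hd
    have hle : (d.sum fun _ e => e) ≤ (φ * ψ).totalDegree :=
      le_totalDegree (mem_support_iff.mpr hd)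
    have hde : (d.sum fun _ e => e) = d.degree := rfl
    omega
  · rw [if_neg hdeg] at hd; exact absurd rfl hd

lemma td_pow {q : MvPolynomial σ ℂ} (hq : q ≠ 0) (j : ℕ) :
    (q ^ j).totalDegree = j * q.totalDegree := by
  induction j with
  | zero => simp
  | succ j ih =>
    rw [pow_succ, td_mul (pow_ne_zero _ hq) hq, ih]; ring

lemma td_polyAeval {q : MvPolynomial σ ℂ} (hq : 1 ≤ q.totalDegree) {P : Polynomial ℂ}
    (hP : 1 ≤ P.natDegree) :
    (Polynomial.aeval q P).totalDegree = P.natDegree * q.totalDegree := by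
  have hq0 : q ≠ 0 := by rintro rfl; simp at hq
  have hP0 : P ≠ 0 := fun h => by simp [h] at hP
  rw [Polynomial.aeval_eq_sum_range, Finset.sum_range_succ]
  have h2 : (P.coeff P.natDegree • q ^ P.natDegree).totalDegree = P.natDegree * q.totalDegree := by
    rw [smul_eq_C_mul, td_C_mul (P.coeff P.natDegree) (Polynomial.leadingCoeff_ne_zero.mpr hP0), td_pow hq0]
  have h1 : (∑ i ∈ Finset.range P.natDegree, P.coeff i • q ^ i).totalDegree ≤
      (P.natDegree - 1) * q.totalDegree := by
    apply totalDegree_finsetSum_le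
    intro i hi
    have hi' : i ≤ P.natDegree - 1 := by have := Finset.mem_range.mp hi; omega
    refine (totalDegree_smul_le _ _).trans ((totalDegree_pow _ _).trans ?_)
    exact Nat.mul_le_mul_right _ hi'
  have hlt : (P.natDegree - 1) * q.totalDegree < P.natDegree * q.totalDegree := by
    have e1 : (P.natDegree - 1) * q.totalDegree = P.natDegree * q.totalDegree - q.totalDegree :=
      Nat.sub_one_mul _ _
    have e2 : q.totalDegree ≤ P.natDegree * q.totalDegree :=
      Nat.le_mul_of_pos_left _ (by omega)
    omega
  rw [totalDegree_add_eq_right_of_totalDegree_lt (lt_of_le_of_lt h1 (hlt.trans_eq h2.symm)), h2]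

end Aux

/-- A polynomial self-map of `ℂ²`, given by its pair of component polynomials. -/
abbrev PolyMap := Fin 2 → MvPolynomial (Fin 2) ℂ

/-- Composition of polynomial self-maps of `ℂ²` (substitution of components). -/
noncomputable def PolyMap.comp (g f : PolyMap) : PolyMap :=
  fun i => MvPolynomial.aeval f (g i)

/-- The degree of a polynomial self-map `f = (f₁, f₂)` of `ℂ²`: `max (deg f₁) (deg f₂)`. -/
noncomputable def PolyMap.deg (f : PolyMap) : ℕ :=
  max (f 0).totalDegree (f 1).totalDegree

lemma PolyMap.comp_assoc (a b c : PolyMap) : (a.comp b).comp c = a.comp (b.comp c) := by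
  funext j
  simp only [PolyMap.comp]
  rw [comp_aeval_apply]
  rfl

lemma td_C_mul_le (a : ℂ) (q : MvPolynomial (Fin 2) ℂ) :
    (C a * q).totalDegree ≤ q.totalDegree :=
  (totalDegree_mul _ _).trans (by simp)

lemma henon_step (A₁ B₁ C₁ A₂ B₂ C₂ : ℂ) (hA₂ : A₂ ≠ 0) (α β δ : ℂ)
    (p : Polynomial ℂ) (hp : 2 ≤ p.natDegree)
    (g : PolyMap) (hg1 : 1 ≤ (g 1).totalDegree) (hg0 : (g 0).totalDegree ≤ (g 1).totalDegree)
    (w : PolyMap)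
    (hw : w = (PolyMap.comp
        ![C A₁ * X 0 + C B₁ * X 1 + C C₁, C A₂ * X 0 + C B₂ * X 1 + C C₂]
        ![C α * X 0 + Polynomial.aeval (X 1 : MvPolynomial (Fin 2) ℂ) p,
          C β * X 1 + C δ]).comp g) :
    (w 1).totalDegree = p.natDegree * (g 1).totalDegree ∧
    (w 0).totalDegree ≤ p.natDegree * (g 1).totalDegree := by
  set P : MvPolynomial (Fin 2) ℂ := Polynomial.aeval (g 1) p with hPdef
  have hPdeg : P.totalDegree = p.natDegree * (g 1).totalDegree :=
    td_polyAeval hg1 (by omega)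
  rw [PolyMap.comp_assoc] at hw
  set m : PolyMap := PolyMap.comp
      ![C α * X 0 + Polynomial.aeval (X 1 : MvPolynomial (Fin 2) ℂ) p, C β * X 1 + C δ] g
      with hmdef
  have hm0 : m 0 = C α * g 0 + P := by
    simp only [hmdef, PolyMap.comp, Matrix.cons_val_zero, map_add, map_mul, aeval_C, aeval_X,
      algebraMap_eq, hPdef]
    congr 1
    rw [← Polynomial.aeval_algHom_apply (MvPolynomial.aeval g)
      (X 1 : MvPolynomial (Fin 2) ℂ) p, aeval_X]
  have hm1 : m 1 = C β * g 1 + C δ := by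
    simp only [hmdef, PolyMap.comp, Matrix.cons_val_one, Matrix.head_cons, map_add, map_mul,
      aeval_C, aeval_X, algebraMap_eq, Matrix.cons_val_zero]
  have hw0 : w 0 = C A₁ * m 0 + C B₁ * m 1 + C C₁ := by
    simp only [hw, PolyMap.comp, Matrix.cons_val_zero, map_add, map_mul, aeval_C, aeval_X,
      algebraMap_eq]
  have hw1 : w 1 = C A₂ * m 0 + C B₂ * m 1 + C C₂ := by
    simp only [hw, PolyMap.comp, Matrix.cons_val_one, Matrix.head_cons, map_add, map_mul,
      aeval_C, aeval_X, algebraMap_eq, Matrix.cons_val_zero]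
  have hD : (g 1).totalDegree < p.natDegree * (g 1).totalDegree := by
    have e2 : 2 * (g 1).totalDegree ≤ p.natDegree * (g 1).totalDegree :=
      Nat.mul_le_mul_right _ hp
    omega
  have hrest : ∀ b₁ b₂ c d : ℂ,
      (C b₁ * g 0 + (C b₂ * g 1 + C c * g 1 + C d)).totalDegree ≤ (g 1).totalDegree := by
    intro b₁ b₂ c d
    refine (totalDegree_add _ _).trans (max_le ?_ ?_)
    · exact (td_C_mul_le _ _).trans hg0
    refine (totalDegree_add _ _).trans (max_le ((totalDegree_add _ _).trans
      (max_le (td_C_mul_le _ _) (td_C_mul_le _ _))) ?_)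
    simp
  constructor
  · have hexp : w 1 = C A₂ * P +
        (C (A₂ * α) * g 0 + (C (B₂ * β) * g 1 + C 0 * g 1 + C (B₂ * δ + C₂))) := by
      rw [hw1, hm0, hm1]
      simp only [C_mul, C_add, C_0]
      ring
    rw [hexp, totalDegree_add_eq_left_of_totalDegree_lt, td_C_mul _ hA₂ P, hPdeg]
    rw [td_C_mul _ hA₂ P, hPdeg]
    exact lt_of_le_of_lt (hrest _ _ _ _) hD
  · have hexp : w 0 = C A₁ * P +
        (C (A₁ * α) * g 0 + (C (B₁ * β) * g 1 + C 0 * g 1 + C (B₁ * δ + C₁))) := by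
      rw [hw0, hm0, hm1]
      simp only [C_mul, C_add, C_0]
      ring
    rw [hexp]
    refine (totalDegree_add _ _).trans (max_le ?_ ?_)
    · exact (td_C_mul_le _ _).trans_eq hPdeg
    · exact (hrest _ _ _ _).trans (le_of_lt hD)

lemma henon_foldr (k : ℕ) (h : Fin k → PolyMap) (d : Fin k → ℕ) (hd : ∀ i, 1 ≤ d i)
    (hstep : ∀ (i : Fin k) (g : PolyMap), 1 ≤ (g 1).totalDegree →
      (g 0).totalDegree ≤ (g 1).totalDegree →
      (((h i).comp g) 1).totalDegree = d i * (g 1).totalDegree ∧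
      (((h i).comp g) 0).totalDegree ≤ d i * (g 1).totalDegree) :
    ((((List.ofFn h).foldr PolyMap.comp (fun i => X i)) 1).totalDegree = ∏ i, d i) ∧
    ((((List.ofFn h).foldr PolyMap.comp (fun i => X i)) 0).totalDegree ≤ ∏ i, d i) := by
  induction k with
  | zero => simp [List.ofFn_zero]
  | succ k ih =>
    have hrec := ih (fun i => h i.succ) (fun i => d i.succ) (fun i => hd i.succ)
      (fun i => hstep i.succ)
    set g : PolyMap := (List.ofFn fun i => h (Fin.succ i)).foldr PolyMap.comp (fun i => X i)
      with hgdef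
    have hfold : (List.ofFn h).foldr PolyMap.comp (fun i => X i) = (h 0).comp g := by
      rw [List.ofFn_succ, List.foldr_cons]
    have hg1 : 1 ≤ (g 1).totalDegree := by
      rw [hrec.1]
      exact Finset.one_le_prod' (fun i _ => hd i.succ)
    have hg0 : (g 0).totalDegree ≤ (g 1).totalDegree := hrec.2.trans_eq hrec.1.symm
    have hs := hstep 0 g hg1 hg0
    rw [hfold, Fin.prod_univ_succ]
    exact ⟨by rw [hs.1, hrec.1], hs.2.trans_eq (by rw [hrec.1])⟩

/-- Algebraic stability for products of affine-elementary pairs: if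
`f = h_k ∘ ⋯ ∘ h_1` where `h_i = a_i ∘ e_i`, with `a_i(x,y) = (A₁x + B₁y + C₁, A₂x + B₂y + C₂)`
an invertible affine map whose extension to `ℙ²` does not fix `I = [1:0:0]`
(equivalently `A₂ ≠ 0`, since `a_i(I) = [A₁ : A₂ : 0]`), and
`e_i(x,y) = (α x + p_i(y), β y + δ)` elementary with `αβ ≠ 0` of degree
`d_i = deg p_i ≥ 2`, then `deg f = d_k ⋯ d_1`. -/
theorem deg_comp_affine_elementary (k : ℕ)
    (A₁ B₁ C₁ A₂ B₂ C₂ : Fin k → ℂ)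
    (hdet : ∀ i, A₁ i * B₂ i - A₂ i * B₁ i ≠ 0)
    (hI : ∀ i, A₂ i ≠ 0)
    (α β δ : Fin k → ℂ) (hαβ : ∀ i, α i * β i ≠ 0)
    (p : Fin k → Polynomial ℂ) (hp : ∀ i, 2 ≤ (p i).natDegree)
    (aff : Fin k → PolyMap)
    (haff : ∀ i, aff i =
      ![C (A₁ i) * X 0 + C (B₁ i) * X 1 + C (C₁ i),
        C (A₂ i) * X 0 + C (B₂ i) * X 1 + C (C₂ i)])
    (elem : Fin k → PolyMap)
    (helem : ∀ i, elem i =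
      ![C (α i) * X 0 + Polynomial.aeval (X 1 : MvPolynomial (Fin 2) ℂ) (p i),
        C (β i) * X 1 + C (δ i)])
    (h : Fin k → PolyMap) (hh : ∀ i, h i = (aff i).comp (elem i))
    (f : PolyMap)
    (hf : f = (List.ofFn h).foldr PolyMap.comp (fun i => X i)) :
    f.deg = ∏ i, (p i).natDegree := by
  have hmain := henon_foldr k h (fun i => (p i).natDegree) (fun i => le_trans one_le_two (hp i))
    (fun i g hg1 hg0 =>
      henon_step (A₁ i) (B₁ i) (C₁ i) (A₂ i) (B₂ i) (C₂ i) (hI i) (α i) (β i) (δ i)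
        (p i) (hp i) g hg1 hg0 ((h i).comp g) (by rw [hh i, haff i, helem i]))
  rw [hf, PolyMap.deg, max_eq_right (hmain.2.trans_eq hmain.1.symm), hmain.1]
end
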